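/- In ℝ^d (d ≥ 2), the set B(0,1)^c ∩ B(e_1, √5/2) ∩ {x : x_1 ≤ 1} is contained in the cone subtended from the origin by the spherical cap C(3/8, e_1) ⊂ S^{d-1}, i.e., every nonzero point x in this set satisfies ⟨x/‖x‖₂, e_1⟩ ≥ 3/8. -/

import Mathlib

open Metric

/-- The set `B(0,1)ᶜ ∩ B(e₁, √5/2) ∩ {x₁ ≤ 1}` is contained in the cone over the
spherical cap `C(3/8, e₁)`. -/
theorem outer_piece_in_cone (d : ℕ) (hd : 2 ≤ d)
    (x : EuclideanSpace ℝ (Fin d)) (hx : x ≠ 0)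
    (h1 : x ∉ closedBall (0 : EuclideanSpace ℝ (Fin d)) 1)
    (h2 : x ∈ closedBall (EuclideanSpace.single (⟨0, by omega⟩ : Fin d) (1 : ℝ))
      (Real.sqrt 5 / 2))
    (h3 : x ⟨0, by omega⟩ ≤ 1) :
    (3 / 8 : ℝ) ≤
      inner ℝ (‖x‖⁻¹ • x) (EuclideanSpace.single (⟨0, by omega⟩ : Fin d) (1 : ℝ)) := by
  set i : Fin d := ⟨0, by omega⟩
  set e : EuclideanSpace ℝ (Fin d) := EuclideanSpace.single i (1 : ℝ)
  have hr : 1 < ‖x‖ := by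
    simp only [mem_closedBall, dist_zero_right, not_le] at h1
    exact h1
  have hip : (inner ℝ x e : ℝ) = x i := by
    simp [e, EuclideanSpace.inner_single_right]
  have hne : ‖e‖ = 1 := by simp [e]
  have hd2 : ‖x - e‖ ≤ Real.sqrt 5 / 2 := by
    simpa [dist_eq_norm] using h2
  have hsq : ‖x - e‖ ^ 2 ≤ 5 / 4 := by
    have h5 : (Real.sqrt 5 / 2) ^ 2 = 5 / 4 := by
      rw [div_pow, Real.sq_sqrt (by norm_num : (5:ℝ) ≥ 0)]
      norm_num
    calc ‖x - e‖ ^ 2 ≤ (Real.sqrt 5 / 2) ^ 2 := by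
          apply pow_le_pow_left₀ (norm_nonneg _) hd2
      _ = 5 / 4 := h5
  have hexp : ‖x - e‖ ^ 2 = ‖x‖ ^ 2 - 2 * inner ℝ x e + ‖e‖ ^ 2 :=
    norm_sub_sq_real x e
  rw [hexp, hne, hip] at hsq
  have hxi : (‖x‖ ^ 2 - 1/4) / 2 ≤ x i := by nlinarith
  have hgoal : (3/8 : ℝ) * ‖x‖ ≤ x i := by nlinarith
  have : (inner ℝ (‖x‖⁻¹ • x) e : ℝ) = ‖x‖⁻¹ * x i := by
    rw [real_inner_smul_left, hip]
  rw [this]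
  have hpos : (0:ℝ) < ‖x‖ := lt_trans one_pos hr
  rw [inv_mul_eq_div, le_div_iff₀ hpos]
  linarith
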